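/- Let $n \geq c$ and let $h_T(x_1,\ldots,x_c)$ denote the complete homogeneous symmetric polynomial of degree $T$ in $c$ variables. Then for any partition $\mu = (\mu_1 > \mu_2 > \cdots > \mu_n \geq 0)$ with strictly decreasing parts, $\sum_{\sigma \in S_n} \mathrm{sgn}(\sigma)\, h_T(x_{\sigma(1)},\ldots,x_{\sigma(c)})\, x_{\sigma(1)}^{\mu_1}\cdots x_{\sigma(n)}^{\mu_n} = \sum_{\lambda} \sum_{\sigma \in S_n} \mathrm{sgn}(\sigma)\, x_{\sigma(1)}^{\lambda_1}\cdots x_{\sigma(n)}^{\lambda_n}$, where the outer sum on the right is over all compositions $\lambda \supseteq \mu$ with $|\lambda| - |\mu| = T$, $\lambda_k = \mu_k$ for $k > c$, and $\lambda_k < \mu_{k-1}$ for $2 \leq k \leq c$. -/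

import Mathlib

open MvPolynomial Finset

/-- `hPoly n c T` is the complete homogeneous symmetric polynomial of degree `T`
in the first `c` of the `n` variables `x_1, …, x_n` (0-indexed `x_0, …, x_{c-1}`). -/
noncomputable def hPoly (n c T : ℕ) : MvPolynomial (Fin n) ℤ :=
  ∑ m ∈ (Finset.univ.filter (fun i : Fin n => (i : ℕ) < c)).sym T,
    ((m : Multiset (Fin n)).map X).prod


noncomputable def aalt (n : ℕ) (α : Fin n → ℕ) : MvPolynomial (Fin n) ℤ :=
  ∑ σ : Equiv.Perm (Fin n), (C (Equiv.Perm.sign σ : ℤ)) * ∏ i, X (σ i) ^ α i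

lemma aalt_comp_swap {n : ℕ} (α : Fin n → ℕ) {j k : Fin n} (hjk : j ≠ k) :
    aalt n (α ∘ Equiv.swap j k) = - aalt n α := by
  unfold aalt
  have key : ∀ σ : Equiv.Perm (Fin n),
      (C (Equiv.Perm.sign σ : ℤ)) * ∏ i, X (σ i) ^ (α ∘ Equiv.swap j k) i
      = - ((C (Equiv.Perm.sign (σ * Equiv.swap j k) : ℤ)) *
          ∏ i, X ((σ * Equiv.swap j k) i) ^ α i) := by
    intro σ
    have h1 : ∏ i, (X (σ i) ^ (α ∘ Equiv.swap j k) i : MvPolynomial (Fin n) ℤ)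
        = ∏ i, X ((σ * Equiv.swap j k) i) ^ α i := by
      have := Equiv.prod_comp (Equiv.swap j k)
        (fun i => (X (σ (Equiv.swap j k i)) ^ α i : MvPolynomial (Fin n) ℤ))
      simp only [Equiv.swap_apply_self] at this
      simpa [Function.comp, Equiv.Perm.mul_apply] using this
    have h2 : (Equiv.Perm.sign (σ * Equiv.swap j k) : ℤ) = - (Equiv.Perm.sign σ : ℤ) := by
      rw [map_mul, Equiv.Perm.sign_swap hjk]; simp
    rw [h1, h2]
    simp [neg_mul]
  rw [Finset.sum_congr rfl (fun σ _ => key σ), Finset.sum_neg_distrib]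
  congr 1
  exact Equiv.sum_comp (Equiv.mulRight (Equiv.swap j k))
    (fun τ => (C (Equiv.Perm.sign τ : ℤ)) * ∏ i, X (τ i) ^ α i)

lemma aalt_eq_zero {n : ℕ} (α : Fin n → ℕ) {j k : Fin n} (hjk : j ≠ k) (h : α j = α k) :
    aalt n α = 0 := by
  have hc : α ∘ Equiv.swap j k = α := by
    funext i
    rcases eq_or_ne i j with rfl | hij
    · simp [Equiv.swap_apply_left, h]
    rcases eq_or_ne i k with rfl | hik
    · simp [Equiv.swap_apply_right, h]
    · simp [Equiv.swap_apply_of_ne_of_ne hij hik]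
  have h2 := aalt_comp_swap α hjk
  rw [hc] at h2
  exact add_self_eq_zero.mp (by linear_combination h2)


def Pred (n c : ℕ) (μ lam : Fin n → ℕ) (k : ℕ) : Prop :=
  0 < k ∧ k + 1 ≤ c ∧ ∀ (h1 : k - 1 < n) (h2 : k < n), μ ⟨k-1, h1⟩ ≤ lam ⟨k, h2⟩

instance (n c : ℕ) (μ lam : Fin n → ℕ) (k : ℕ) : Decidable (Pred n c μ lam k) := by
  unfold Pred; infer_instance

def Kf (n c : ℕ) (μ lam : Fin n → ℕ) : ℕ := Nat.findGreatest (Pred n c μ lam) c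

def idx (n : ℕ) (hn : 0 < n) (k : ℕ) : Fin n := ⟨k % n, Nat.mod_lt _ hn⟩

lemma idx_eq {n : ℕ} (hn : 0 < n) {k : ℕ} (h : k < n) : idx n hn k = ⟨k, h⟩ :=
  Fin.ext (Nat.mod_eq_of_lt h)

lemma bad_cancel (n c T : ℕ) (hcn : c ≤ n) (hc : 1 ≤ c) (μ : Fin n → ℕ)
    (hμ : ∀ i j : Fin n, i < j → μ j < μ i) :
    ∑ lam ∈ ((Fintype.piFinset fun i : Fin n => Finset.range (μ i + T + 1)).filter
        (fun lam : Fin n → ℕ =>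
          (∀ i, μ i ≤ lam i) ∧
          ((∑ i, lam i) = (∑ i, μ i) + T) ∧
          (∀ i : Fin n, c ≤ (i : ℕ) → lam i = μ i) ∧
          ¬(∀ j k : Fin n, (j : ℕ) + 1 = (k : ℕ) → (k : ℕ) + 1 ≤ c → lam k < μ j))),
      aalt n lam = 0 := by
  classical
  have npos : 0 < n := lt_of_lt_of_le hc hcn
  set B := ((Fintype.piFinset fun i : Fin n => Finset.range (μ i + T + 1)).filter
        (fun lam : Fin n → ℕ =>
          (∀ i, μ i ≤ lam i) ∧
          ((∑ i, lam i) = (∑ i, μ i) + T) ∧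
          (∀ i : Fin n, c ≤ (i : ℕ) → lam i = μ i) ∧
          ¬(∀ j k : Fin n, (j : ℕ) + 1 = (k : ℕ) → (k : ℕ) + 1 ≤ c → lam k < μ j)))
    with hBdef
  -- every member of B satisfies Pred at its Kf
  have predK : ∀ lam ∈ B, Pred n c μ lam (Kf n c μ lam) := by
    intro lam ha
    rw [hBdef, Finset.mem_filter] at ha
    obtain ⟨-, h1, h2, h3, h4⟩ := ha
    push_neg at h4
    obtain ⟨j, k, hjk, hkc, hle⟩ := h4
    have hpk : Pred n c μ lam (k : ℕ) := by
      refine ⟨by omega, hkc, ?_⟩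
      intro hh1 hh2
      have e1 : (⟨(k : ℕ) - 1, hh1⟩ : Fin n) = j := by
        apply Fin.ext; simp; omega
      have e2 : (⟨(k : ℕ), hh2⟩ : Fin n) = k := Fin.ext rfl
      rw [e1, e2]; exact hle
    exact Nat.findGreatest_spec (by omega : (k : ℕ) ≤ c) hpk
  -- the involution
  refine Finset.sum_involution
    (fun lam _ => lam ∘ Equiv.swap (idx n npos (Kf n c μ lam - 1)) (idx n npos (Kf n c μ lam)))
    ?_ ?_ ?_ ?_
  · -- cancellation
    intro lam ha
    have hK := predK lam ha
    obtain ⟨hK1, hKc, hKle⟩ := hK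
    have hKn : Kf n c μ lam < n := by omega
    have hab : idx n npos (Kf n c μ lam - 1) ≠ idx n npos (Kf n c μ lam) := by
      rw [idx_eq npos (by omega), idx_eq npos hKn]
      exact Fin.ne_of_val_ne (show Kf n c μ lam - 1 ≠ Kf n c μ lam by omega)
    rw [aalt_comp_swap lam hab]
    ring
  · -- nontrivial on nonzero terms
    intro lam ha h0
    have hK := predK lam ha
    obtain ⟨hK1, hKc, hKle⟩ := hK
    have hKn : Kf n c μ lam < n := by omega
    have hab : idx n npos (Kf n c μ lam - 1) ≠ idx n npos (Kf n c μ lam) := by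
      rw [idx_eq npos (by omega), idx_eq npos hKn]
      exact Fin.ne_of_val_ne (show Kf n c μ lam - 1 ≠ Kf n c μ lam by omega)
    intro heq
    beta_reduce at heq
    apply h0
    have := aalt_comp_swap lam hab
    rw [heq] at this
    exact add_self_eq_zero.mp (by linear_combination this)
  · -- maps into B
    intro lam ha
    have hK := predK lam ha
    obtain ⟨hK1, hKc, hKle⟩ := hK
    have hKn : Kf n c μ lam < n := by omega
    have hK1n : Kf n c μ lam - 1 < n := by omega
    set K := Kf n c μ lam with hKdef
    set a : Fin n := ⟨K - 1, hK1n⟩ with hadef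
    set b : Fin n := ⟨K, hKn⟩ with hbdef
    have hia : idx n npos (K - 1) = a := idx_eq npos hK1n
    have hib : idx n npos K = b := idx_eq npos hKn
    beta_reduce
    rw [hia, hib]
    have hμab : μ a ≤ lam b := hKle hK1n hKn
    have hab : a ≠ b := Fin.ne_of_val_ne (by simp [hadef, hbdef]; omega)
    have haltb : a < b := by rw [Fin.lt_def]; simp [hadef, hbdef]; omega
    rw [hBdef, Finset.mem_filter] at ha ⊢
    obtain ⟨hpi, h1, h2, h3, h4⟩ := ha
    have hswap : ∀ i : Fin n, (lam ∘ Equiv.swap a b) i =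
        if i = a then lam b else if i = b then lam a else lam i := by
      intro i
      rcases eq_or_ne i a with rfl | hia'
      · simp [Equiv.swap_apply_left]
      rcases eq_or_ne i b with rfl | hib'
      · simp [Equiv.swap_apply_right, hab.symm, Function.comp]
      · simp [Function.comp, Equiv.swap_apply_of_ne_of_ne hia' hib', hia', hib']
    have hge : ∀ i, μ i ≤ (lam ∘ Equiv.swap a b) i := by
      intro i
      rw [hswap i]
      rcases eq_or_ne i a with rfl | hia'
      · simp [hμab]
      rcases eq_or_ne i b with rfl | hib'
      · simp [hia', le_trans (le_of_lt (hμ a b haltb)) (le_trans (h1 a) (le_refl _))]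
      · simp [hia', hib', h1 i]
    have hsum : (∑ i, (lam ∘ Equiv.swap a b) i) = (∑ i, μ i) + T := by
      rw [show (∑ i, (lam ∘ Equiv.swap a b) i) = ∑ i, lam (Equiv.swap a b i) from rfl]
      rw [Equiv.sum_comp (Equiv.swap a b) lam]
      exact h2
    refine ⟨?_, hge, hsum, ?_, ?_⟩
    · -- piFinset membership
      rw [Fintype.mem_piFinset]
      intro i
      rw [Finset.mem_range]
      -- bound from sum
      have key : (lam ∘ Equiv.swap a b) i ≤ μ i + T := by
        have h5 : ((lam ∘ Equiv.swap a b) i) + ∑ x ∈ Finset.univ.erase i, (lam ∘ Equiv.swap a b) x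
            = ∑ x, (lam ∘ Equiv.swap a b) x :=
          Finset.add_sum_erase _ _ (Finset.mem_univ i)
        have h6 : (μ i) + ∑ x ∈ Finset.univ.erase i, μ x = ∑ x, μ x :=
          Finset.add_sum_erase _ _ (Finset.mem_univ i)
        have h7 : ∑ x ∈ Finset.univ.erase i, μ x ≤ ∑ x ∈ Finset.univ.erase i, (lam ∘ Equiv.swap a b) x :=
          Finset.sum_le_sum (fun x _ => hge x)
        omega
      omega
    · -- equal to μ beyond c
      intro i hci
      have hia' : i ≠ a := Fin.ne_of_val_ne (by simp [hadef]; omega)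
      have hib' : i ≠ b := Fin.ne_of_val_ne (by simp [hbdef]; omega)
      rw [hswap i, if_neg hia', if_neg hib']
      exact h3 i hci
    · -- still bad
      push_neg
      refine ⟨a, b, by simp [hadef, hbdef]; omega, by simp [hbdef]; omega, ?_⟩
      rw [hswap b, if_neg hab.symm, if_pos rfl]
      exact h1 a
  · -- involution
    intro lam ha
    have hK := predK lam ha
    obtain ⟨hK1, hKc, hKle⟩ := hK
    have hKn : Kf n c μ lam < n := by omega
    have hK1n : Kf n c μ lam - 1 < n := by omega
    set K := Kf n c μ lam with hKdef
    set a : Fin n := ⟨K - 1, hK1n⟩ with hadef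
    set b : Fin n := ⟨K, hKn⟩ with hbdef
    have hia : idx n npos (K - 1) = a := idx_eq npos hK1n
    have hib : idx n npos K = b := idx_eq npos hKn
    have hab : a ≠ b := Fin.ne_of_val_ne (by simp [hadef, hbdef]; omega)
    -- the key: Kf of the swapped function equals K
    have hKK : Kf n c μ (lam ∘ Equiv.swap a b) = K := by
      have h1' : ∀ i, μ i ≤ lam i := by
        rw [hBdef, Finset.mem_filter] at ha; exact ha.2.1
      apply le_antisymm
      · by_contra hlt
        push_neg at hlt
        set F := Kf n c μ (lam ∘ Equiv.swap a b) with hFdef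
        have hpF : Pred n c μ (lam ∘ Equiv.swap a b) F := by
          apply Nat.findGreatest_spec (show K ≤ c by omega)
          -- Pred (lam ∘ swap) K holds
          refine ⟨hK1, hKc, ?_⟩
          intro hh1 hh2
          have : (⟨K, hh2⟩ : Fin n) = b := rfl
          rw [this]
          have hb' : (lam ∘ Equiv.swap a b) b = lam a := by
            simp [Function.comp, Equiv.swap_apply_right]
          rw [hb']
          have : (⟨K - 1, hh1⟩ : Fin n) = a := rfl
          rw [this]
          exact h1' a
        obtain ⟨hF1, hFc, hFle⟩ := hpF
        have hFn : F < n := by omega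
        have hF1n : F - 1 < n := by omega
        have hne1 : (⟨F, hFn⟩ : Fin n) ≠ a := Fin.ne_of_val_ne (by simp [hadef]; omega)
        have hne2 : (⟨F, hFn⟩ : Fin n) ≠ b := Fin.ne_of_val_ne (by simp [hbdef]; omega)
        have heval : (lam ∘ Equiv.swap a b) ⟨F, hFn⟩ = lam ⟨F, hFn⟩ := by
          simp [Function.comp, Equiv.swap_apply_of_ne_of_ne hne1 hne2]
        have hpredF : Pred n c μ lam F := by
          refine ⟨hF1, hFc, ?_⟩
          intro hh1 hh2
          have := hFle hh1 hh2
          rwa [heval] at this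
        exact Nat.findGreatest_is_greatest hlt (by omega) hpredF
      · apply Nat.le_findGreatest (by omega)
        refine ⟨hK1, hKc, ?_⟩
        intro hh1 hh2
        have hb' : (lam ∘ Equiv.swap a b) ⟨K, hh2⟩ = lam a := by
          have : (⟨K, hh2⟩ : Fin n) = b := rfl
          rw [this]; simp [Function.comp, Equiv.swap_apply_right]
        rw [hb']
        have : (⟨K - 1, hh1⟩ : Fin n) = a := rfl
        rw [this]
        have h1' : ∀ i, μ i ≤ lam i := by
          rw [hBdef, Finset.mem_filter] at ha; exact ha.2.1
        exact h1' a
    simp only [hia, hib, hKK]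
    funext i
    simp [Function.comp, Equiv.swap_apply_self]

lemma card_finsum {α γ : Type*} [DecidableEq α] (s : Finset γ) (f : γ → Multiset α) :
    Multiset.card (∑ i ∈ s, f i) = ∑ i ∈ s, Multiset.card (f i) := by
  induction s using Finset.cons_induction with
  | empty => simp
  | cons a s ha ih => simp [Finset.sum_cons, ih]


lemma lhs_eq (n c T : ℕ) (μ : Fin n → ℕ) :
    ∑ σ : Equiv.Perm (Fin n),
      (C (Equiv.Perm.sign σ : ℤ)) * rename σ (hPoly n c T) * ∏ i, X (σ i) ^ μ i
    = ∑ lam ∈ ((Fintype.piFinset fun i : Fin n => Finset.range (μ i + T + 1)).filter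
        (fun lam : Fin n → ℕ =>
          (∀ i, μ i ≤ lam i) ∧
          ((∑ i, lam i) = (∑ i, μ i) + T) ∧
          (∀ i : Fin n, c ≤ (i : ℕ) → lam i = μ i))),
      aalt n lam := by
  classical
  have hren : ∀ σ : Equiv.Perm (Fin n),
      rename σ (hPoly n c T) = ∑ m ∈ (Finset.univ.filter (fun i : Fin n => (i : ℕ) < c)).sym T,
        ((m : Multiset (Fin n)).map (fun j => X (σ j))).prod := by
    intro σ
    unfold hPoly
    rw [map_sum]
    refine Finset.sum_congr rfl ?_
    intro m _
    rw [map_multiset_prod, Multiset.map_map]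
    congr 1
    exact Multiset.map_congr rfl (fun j _ => rename_X σ j)
  calc ∑ σ : Equiv.Perm (Fin n),
        (C (Equiv.Perm.sign σ : ℤ)) * rename σ (hPoly n c T) * ∏ i, X (σ i) ^ μ i
      = ∑ σ : Equiv.Perm (Fin n), ∑ m ∈ (Finset.univ.filter (fun i : Fin n => (i : ℕ) < c)).sym T,
          (C (Equiv.Perm.sign σ : ℤ)) * ((m : Multiset (Fin n)).map (fun j => X (σ j))).prod
            * ∏ i, X (σ i) ^ μ i := by
        refine Finset.sum_congr rfl ?_
        intro σ _
        rw [hren σ, Finset.mul_sum, Finset.sum_mul]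
    _ = ∑ m ∈ (Finset.univ.filter (fun i : Fin n => (i : ℕ) < c)).sym T,
          ∑ σ : Equiv.Perm (Fin n),
          (C (Equiv.Perm.sign σ : ℤ)) * ((m : Multiset (Fin n)).map (fun j => X (σ j))).prod
            * ∏ i, X (σ i) ^ μ i := Finset.sum_comm
    _ = ∑ m ∈ (Finset.univ.filter (fun i : Fin n => (i : ℕ) < c)).sym T,
          aalt n (fun i => μ i + Multiset.count i (m : Multiset (Fin n))) := by
        refine Finset.sum_congr rfl ?_
        intro m _
        unfold aalt
        refine Finset.sum_congr rfl ?_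
        intro σ _
        rw [mul_assoc]
        congr 1
        have e1 : ((m : Multiset (Fin n)).map (fun j => (X (σ j) : MvPolynomial (Fin n) ℤ))).prod
            = ∏ i, X (σ i) ^ (Multiset.count i (m : Multiset (Fin n))) := by
          rw [Finset.prod_multiset_map_count]
          refine Finset.prod_subset (Finset.subset_univ _) ?_
          intro i _ hi
          rw [Multiset.count_eq_zero.2 (by simpa using hi), pow_zero]
        rw [e1, ← Finset.prod_mul_distrib]
        refine Finset.prod_congr rfl ?_
        intro i _
        rw [← pow_add, add_comm]
    _ = ∑ lam ∈ ((Fintype.piFinset fun i : Fin n => Finset.range (μ i + T + 1)).filter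
        (fun lam : Fin n → ℕ =>
          (∀ i, μ i ≤ lam i) ∧
          ((∑ i, lam i) = (∑ i, μ i) + T) ∧
          (∀ i : Fin n, c ≤ (i : ℕ) → lam i = μ i))),
        aalt n lam := by
        refine Finset.sum_nbij (fun m => fun i => μ i + Multiset.count i (m : Multiset (Fin n)))
          ?_ ?_ ?_ ?_
        · intro m hm
          rw [Finset.mem_sym_iff] at hm
          have hcard : Multiset.card (m : Multiset (Fin n)) = T := m.2
          have hsumcount : ∑ i : Fin n, Multiset.count i (m : Multiset (Fin n)) = T := by
            have e := Multiset.toFinset_sum_count_eq (m : Multiset (Fin n))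
            have e2 : ∑ i : Fin n, Multiset.count i (m : Multiset (Fin n))
                = ∑ i ∈ (m : Multiset (Fin n)).toFinset, Multiset.count i (m : Multiset (Fin n)) :=
              (Finset.sum_subset (Finset.subset_univ _)
                (fun i _ hi => Multiset.count_eq_zero.2 (by simpa using hi))).symm
            rw [e2, e, hcard]
          beta_reduce
          rw [Finset.mem_filter]
          refine ⟨?_, fun i => Nat.le_add_right _ _, ?_, ?_⟩
          · rw [Fintype.mem_piFinset]
            intro i
            rw [Finset.mem_range]
            have := Multiset.count_le_card i (m : Multiset (Fin n))
            omega
          · rw [Finset.sum_add_distrib, hsumcount]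
          · intro i hci
            have hcz : Multiset.count i (m : Multiset (Fin n)) = 0 := by
              rw [Multiset.count_eq_zero]
              intro hmem
              have := hm i hmem
              rw [Finset.mem_filter] at this
              omega
            show μ i + Multiset.count i (m : Multiset (Fin n)) = μ i
            omega
        · intro m1 h1 m2 h2 heq
          apply Subtype.ext
          ext a
          have := congrFun heq a
          simpa using this
        · intro lam hlam
          rw [Finset.mem_coe, Finset.mem_filter, Fintype.mem_piFinset] at hlam
          obtain ⟨hrange, h1, h2, h3⟩ := hlam
          have hcard : Multiset.card (∑ i : Fin n, Multiset.replicate (lam i - μ i) i) = T := by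
            rw [card_finsum]
            simp only [Multiset.card_replicate]
            have : ∑ i : Fin n, (lam i - μ i) = ∑ i : Fin n, lam i - ∑ i : Fin n, μ i := by
              rw [Finset.sum_tsub_distrib]
              intro i _
              exact h1 i
            omega
          refine ⟨Sym.mk (∑ i : Fin n, Multiset.replicate (lam i - μ i) i) hcard, ?_, ?_⟩
          · rw [Finset.mem_coe, Finset.mem_sym_iff]
            intro a hmem
            simp only [Sym.mem_mk] at hmem
            rw [Multiset.mem_sum] at hmem
            obtain ⟨i, _, hmem2⟩ := hmem
            have haeq := Multiset.eq_of_mem_replicate hmem2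
            rw [haeq]
            rw [Finset.mem_filter]
            refine ⟨Finset.mem_univ _, ?_⟩
            by_contra hcle
            push_neg at hcle
            have := h3 i hcle
            have hz : lam i - μ i = 0 := by omega
            rw [hz] at hmem2
            simp at hmem2
          · funext i
            have hcount : Multiset.count i (∑ j : Fin n, Multiset.replicate (lam j - μ j) j)
                = lam i - μ i := by
              rw [Multiset.count_sum']
              rw [Finset.sum_eq_single i]
              · rw [Multiset.count_replicate_self]
              · intro j _ hji
                rw [Multiset.count_replicate, if_neg hji]
              · intro h; exact absurd (Finset.mem_univ i) h
            show μ i + Multiset.count i (∑ j : Fin n, Multiset.replicate (lam j - μ j) j) = lam i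
            rw [hcount]
            have := h1 i
            omega
        · intro m _
          rfl


/-- multiplying the alternant `∑_σ sgn(σ) x_{σ(1)}^{μ_1} ⋯ x_{σ(n)}^{μ_n}`
by `h_T(x_{σ(1)},…,x_{σ(c)})` inside the sum yields the sum of alternants over all
compositions `λ ⊇ μ` with `|λ| - |μ| = T`, `λ_k = μ_k` for `k > c` and
`λ_k < μ_{k-1}` for `2 ≤ k ≤ c`.  (All indices are 0-indexed in the formalization.) -/
theorem stmt0 (n c T : ℕ) (hcn : c ≤ n) (hc : 1 ≤ c) (μ : Fin n → ℕ)
    (hμ : ∀ i j : Fin n, i < j → μ j < μ i) :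
    ∑ σ : Equiv.Perm (Fin n),
      (C (Equiv.Perm.sign σ : ℤ)) * rename σ (hPoly n c T) * ∏ i, X (σ i) ^ μ i
    =
    ∑ lam ∈ (Fintype.piFinset fun i : Fin n => Finset.range (μ i + T + 1)).filter
        (fun lam : Fin n → ℕ =>
          (∀ i, μ i ≤ lam i) ∧
          ((∑ i, lam i) = (∑ i, μ i) + T) ∧
          (∀ i : Fin n, c ≤ (i : ℕ) → lam i = μ i) ∧
          (∀ j k : Fin n, (j : ℕ) + 1 = (k : ℕ) → (k : ℕ) + 1 ≤ c → lam k < μ j)),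
      ∑ σ : Equiv.Perm (Fin n),
        (C (Equiv.Perm.sign σ : ℤ)) * ∏ i, X (σ i) ^ lam i := by
  classical
  rw [lhs_eq n c T μ]
  have hR : (∑ lam ∈ (Fintype.piFinset fun i : Fin n => Finset.range (μ i + T + 1)).filter
        (fun lam : Fin n → ℕ =>
          (∀ i, μ i ≤ lam i) ∧
          ((∑ i, lam i) = (∑ i, μ i) + T) ∧
          (∀ i : Fin n, c ≤ (i : ℕ) → lam i = μ i) ∧
          (∀ j k : Fin n, (j : ℕ) + 1 = (k : ℕ) → (k : ℕ) + 1 ≤ c → lam k < μ j)),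
      ∑ σ : Equiv.Perm (Fin n),
        (C (Equiv.Perm.sign σ : ℤ)) * ∏ i, X (σ i) ^ lam i)
      = ∑ lam ∈ (Fintype.piFinset fun i : Fin n => Finset.range (μ i + T + 1)).filter
        (fun lam : Fin n → ℕ =>
          (∀ i, μ i ≤ lam i) ∧
          ((∑ i, lam i) = (∑ i, μ i) + T) ∧
          (∀ i : Fin n, c ≤ (i : ℕ) → lam i = μ i) ∧
          (∀ j k : Fin n, (j : ℕ) + 1 = (k : ℕ) → (k : ℕ) + 1 ≤ c → lam k < μ j)),
        aalt n lam := rfl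
  rw [hR]
  set S3 := (Fintype.piFinset fun i : Fin n => Finset.range (μ i + T + 1)).filter
        (fun lam : Fin n → ℕ =>
          (∀ i, μ i ≤ lam i) ∧
          ((∑ i, lam i) = (∑ i, μ i) + T) ∧
          (∀ i : Fin n, c ≤ (i : ℕ) → lam i = μ i)) with hS3
  have hsplit := (Finset.sum_filter_add_sum_filter_not S3
    (fun lam : Fin n → ℕ => ∀ j k : Fin n, (j : ℕ) + 1 = (k : ℕ) → (k : ℕ) + 1 ≤ c → lam k < μ j)
    (aalt n)).symm
  rw [hsplit]
  have h1 : S3.filter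
      (fun lam : Fin n → ℕ => ∀ j k : Fin n, (j : ℕ) + 1 = (k : ℕ) → (k : ℕ) + 1 ≤ c → lam k < μ j)
      = (Fintype.piFinset fun i : Fin n => Finset.range (μ i + T + 1)).filter
        (fun lam : Fin n → ℕ =>
          (∀ i, μ i ≤ lam i) ∧
          ((∑ i, lam i) = (∑ i, μ i) + T) ∧
          (∀ i : Fin n, c ≤ (i : ℕ) → lam i = μ i) ∧
          (∀ j k : Fin n, (j : ℕ) + 1 = (k : ℕ) → (k : ℕ) + 1 ≤ c → lam k < μ j)) := by
    rw [hS3, Finset.filter_filter]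
    apply Finset.filter_congr
    intro lam _
    tauto
  have h2 : ∑ lam ∈ S3.filter
      (fun lam : Fin n → ℕ => ¬ ∀ j k : Fin n, (j : ℕ) + 1 = (k : ℕ) → (k : ℕ) + 1 ≤ c → lam k < μ j),
      aalt n lam = 0 := by
    have hB : S3.filter
        (fun lam : Fin n → ℕ => ¬ ∀ j k : Fin n, (j : ℕ) + 1 = (k : ℕ) → (k : ℕ) + 1 ≤ c → lam k < μ j)
        = (Fintype.piFinset fun i : Fin n => Finset.range (μ i + T + 1)).filter
        (fun lam : Fin n → ℕ =>
          (∀ i, μ i ≤ lam i) ∧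
          ((∑ i, lam i) = (∑ i, μ i) + T) ∧
          (∀ i : Fin n, c ≤ (i : ℕ) → lam i = μ i) ∧
          ¬(∀ j k : Fin n, (j : ℕ) + 1 = (k : ℕ) → (k : ℕ) + 1 ≤ c → lam k < μ j)) := by
      rw [hS3, Finset.filter_filter]
      apply Finset.filter_congr
      intro lam _
      tauto
    rw [hB]
    exact bad_cancel n c T hcn hc μ hμ
  rw [h1, h2, add_zero]
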